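/- arXiv:2509.23642 — 3 statements merged into one kernel-verified Lean document; each statement's English description precedes it below -/
import Mathlib

section
/- Let k ≥ 2 be an integer and 0 < α < π/4. With β = arctan(tan^k α), the quantity E(α) = (cos^{2(k-1)}α sin^{2(k+1)}α + sin^{2(k-1)}α cos^{2(k+1)}α) / (cos^{2k}α + sin^{2k}α)² satisfies lim_{α→0⁺} E(α)/α^{2(k-1)} = 1; equivalently E(α)/β^{2(1-1/k)} → 1 as α → 0⁺. -/
open Real Filter Set

noncomputable section

/-- Leading-order infidelity factor of the transversal injection output:
E(α) = (cos^{2(k-1)}α sin^{2(k+1)}α + sin^{2(k-1)}α cos^{2(k+1)}α) / (cos^{2k}α + sin^{2k}α)². -/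
def Efactor (k : ℕ) (α : ℝ) : ℝ :=
  (Real.cos α ^ (2*(k-1)) * Real.sin α ^ (2*(k+1))
      + Real.sin α ^ (2*(k-1)) * Real.cos α ^ (2*(k+1)))
    / (Real.cos α ^ (2*k) + Real.sin α ^ (2*k)) ^ 2

lemma aux_sin_div : Tendsto (fun α : ℝ => Real.sin α / α)
    (nhdsWithin 0 (Set.Ioo 0 (Real.pi/4))) (nhds 1) := by
  have h := (Real.hasDerivAt_sin 0)
  rw [hasDerivAt_iff_tendsto_slope] at h
  have h2 : Tendsto (slope Real.sin 0) (nhdsWithin 0 (Set.Ioo 0 (Real.pi/4))) (nhds 1) := by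
    simpa using h.mono_left (nhdsWithin_mono _ (fun x hx => ne_of_gt hx.1))
  refine h2.congr fun α => ?_
  simp [slope_def_field]

lemma aux_tan_div : Tendsto (fun α : ℝ => Real.tan α / α)
    (nhdsWithin 0 (Set.Ioo 0 (Real.pi/4))) (nhds 1) := by
  have h := (Real.hasDerivAt_tan (x := 0) (by simp))
  rw [hasDerivAt_iff_tendsto_slope] at h
  have h2 : Tendsto (slope Real.tan 0) (nhdsWithin 0 (Set.Ioo 0 (Real.pi/4))) (nhds 1) := by
    simpa using h.mono_left (nhdsWithin_mono _ (fun x hx => ne_of_gt hx.1))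
  refine h2.congr fun α => ?_
  simp [slope_def_field]

lemma aux_arctan_div : Tendsto (fun u : ℝ => Real.arctan u / u)
    (nhdsWithin 0 (Set.Ioi (0:ℝ))) (nhds 1) := by
  have h := (Real.hasDerivAt_arctan 0)
  rw [hasDerivAt_iff_tendsto_slope] at h
  have h2 : Tendsto (slope Real.arctan 0) (nhdsWithin 0 (Set.Ioi (0:ℝ))) (nhds 1) := by
    simpa using h.mono_left (nhdsWithin_mono (s := Set.Ioi (0:ℝ)) _ (fun x hx => ne_of_gt hx))
  refine h2.congr fun u => ?_
  simp [slope_def_field]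

lemma aux_tanpow (k : ℕ) (hk : k ≠ 0) : Tendsto (fun α : ℝ => Real.tan α ^ k)
    (nhdsWithin 0 (Set.Ioo 0 (Real.pi/4))) (nhdsWithin 0 (Set.Ioi (0:ℝ))) := by
  apply tendsto_nhdsWithin_of_tendsto_nhds_of_eventually_within
  · have hc : ContinuousAt (fun α : ℝ => Real.tan α ^ k) 0 :=
      (Real.continuousAt_tan.2 (by simp)).pow k
    have h0 : Real.tan (0:ℝ) ^ k = 0 := by simp [Real.tan_zero, zero_pow hk]
    have := hc.tendsto.mono_left (nhdsWithin_le_nhds (s := Set.Ioo 0 (Real.pi/4)))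
    simpa [Real.tan_zero, zero_pow hk] using this
  · filter_upwards [eventually_mem_nhdsWithin] with α hα
    have ht : 0 < Real.tan α := Real.tan_pos_of_pos_of_lt_pi_div_two hα.1
      (lt_trans hα.2 (by linarith [Real.pi_pos]))
    exact pow_pos ht k


/-- E(α)/α^{2(k-1)} → 1 as α → 0⁺, and equivalently, with β = arctan(tan^k α),
E(α)/β^{2(1-1/k)} → 1 as α → 0⁺. -/
theorem infidelity_factor_scaling (k : ℕ) (hk : 2 ≤ k) :
    Tendsto (fun α : ℝ => Efactor k α / α ^ (2*(k-1)))
      (nhdsWithin 0 (Set.Ioo 0 (Real.pi/4))) (nhds 1) ∧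
    Tendsto (fun α : ℝ =>
        Efactor k α / (Real.arctan (Real.tan α ^ k)) ^ ((2:ℝ) * (1 - 1/(k:ℝ))))
      (nhdsWithin 0 (Set.Ioo 0 (Real.pi/4))) (nhds 1) := by
  have hk0 : k ≠ 0 := by omega
  have hk1 : (1:ℝ) ≤ (k:ℝ) := by exact_mod_cast Nat.one_le_iff_ne_zero.2 hk0
  set L := nhdsWithin (0:ℝ) (Set.Ioo 0 (Real.pi/4)) with hL
  set G : ℝ → ℝ := fun α =>
    (Real.cos α ^ (2*(k-1)) * Real.sin α ^ 4 + Real.cos α ^ (2*(k+1)))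
      / (Real.cos α ^ (2*k) + Real.sin α ^ (2*k)) ^ 2 with hGdef
  -- basic facts on the set
  have hmem : ∀ᶠ α in L, α ∈ Set.Ioo 0 (Real.pi/4) := eventually_mem_nhdsWithin
  have hG : Tendsto G L (nhds 1) := by
    have hden : ((Real.cos 0 ^ (2*k) + Real.sin 0 ^ (2*k)) ^ 2 : ℝ) ≠ 0 := by
      simp [zero_pow (by omega : 2*k ≠ 0)]
    have hc : ContinuousAt G 0 := by
      apply ContinuousAt.div
      · fun_prop
      · fun_prop
      · exact hden
    have hval : G 0 = 1 := by
      simp [hGdef, zero_pow (by omega : 2*(k-1) ≠ 0), zero_pow (by omega : 2*k ≠ 0),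
        zero_pow (by omega : 2*(k+1) ≠ 0)]
    have := hc.tendsto.mono_left (nhdsWithin_le_nhds (s := Set.Ioo 0 (Real.pi/4)))
    rwa [hval] at this
  have first : Tendsto (fun α : ℝ => Efactor k α / α ^ (2*(k-1))) L (nhds 1) := by
    have h1 : Tendsto (fun α : ℝ => (Real.sin α / α) ^ (2*(k-1)) * G α) L (nhds 1) := by
      simpa using (aux_sin_div.pow (2*(k-1))).mul hG
    refine h1.congr' ?_
    filter_upwards [hmem] with α hα
    have hαpos : 0 < α := hα.1
    have hαlt : α < Real.pi/2 := lt_trans hα.2 (by linarith [Real.pi_pos])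
    have hs : 0 < Real.sin α := Real.sin_pos_of_pos_of_lt_pi hαpos
      (lt_trans hαlt (by linarith [Real.pi_pos]))
    have hc : 0 < Real.cos α := Real.cos_pos_of_mem_Ioo ⟨by linarith, hαlt⟩
    have hD : (0:ℝ) < Real.cos α ^ (2*k) + Real.sin α ^ (2*k) :=
      add_pos (pow_pos hc _) (pow_pos hs _)
    have key : Real.sin α ^ (2*(k+1)) = Real.sin α ^ (2*(k-1)) * Real.sin α ^ 4 := by
      rw [← pow_add]; congr 1; omega
    rw [hGdef]
    simp only [Efactor]
    rw [key, div_pow]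
    field_simp
  refine ⟨first, ?_⟩
  set r : ℝ := (2:ℝ) * (1 - 1/(k:ℝ)) with hrdef
  have hr : 0 ≤ r := by
    have : (1:ℝ)/(k:ℝ) ≤ 1 := by
      rw [div_le_one (by linarith)]; linarith
    rw [hrdef]; linarith
  have hkr : (k:ℝ) * r = 2*((k:ℝ)-1) := by
    rw [hrdef]; field_simp
  set H : ℝ → ℝ := fun α => (α / Real.tan α) ^ k *
    (Real.tan α ^ k / Real.arctan (Real.tan α ^ k)) with hHdef
  have h_inv1 : Tendsto (fun α : ℝ => α / Real.tan α) L (nhds 1) := by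
    have := aux_tan_div.inv₀ one_ne_zero
    simp only [inv_div, inv_one] at this
    exact this
  have h_inv2 : Tendsto (fun α : ℝ => Real.tan α ^ k / Real.arctan (Real.tan α ^ k))
      L (nhds 1) := by
    have hcomp : Tendsto (fun α : ℝ => Real.arctan (Real.tan α ^ k) / Real.tan α ^ k)
        L (nhds 1) := aux_arctan_div.comp (aux_tanpow k hk0)
    have := hcomp.inv₀ one_ne_zero
    simp only [inv_div, inv_one] at this
    exact this
  have hH : Tendsto H L (nhds 1) := by
    simpa using (h_inv1.pow k).mul h_inv2
  have hHr : Tendsto (fun α : ℝ => H α ^ r) L (nhds 1) := by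
    simpa using hH.rpow_const (Or.inr hr)
  have hmain := first.mul hHr
  rw [one_mul] at hmain
  refine hmain.congr' ?_
  filter_upwards [hmem] with α hα
  have hαpos : 0 < α := hα.1
  have hαlt : α < Real.pi/2 := lt_trans hα.2 (by linarith [Real.pi_pos])
  have ht : 0 < Real.tan α := Real.tan_pos_of_pos_of_lt_pi_div_two hαpos hαlt
  have hu : 0 < Real.tan α ^ k := pow_pos ht k
  have hβ : 0 < Real.arctan (Real.tan α ^ k) := by simpa using Real.arctan_strictMono hu
  set u := Real.tan α ^ k
  set β := Real.arctan u
  have step1 : H α = α ^ k / β := by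
    simp only [hHdef]
    rw [div_pow]
    field_simp
    rfl
  have step2 : (α ^ k / β) ^ r = α ^ (2*(k-1)) / β ^ r := by
    rw [Real.div_rpow (by positivity) hβ.le]
    congr 1
    rw [← Real.rpow_natCast α k, ← Real.rpow_mul hαpos.le, hkr]
    rw [← Real.rpow_natCast α (2*(k-1))]
    congr 1
    push_cast [Nat.cast_sub (by omega : 1 ≤ k)]
    ring
  rw [step1, step2]
  have hαn : (α:ℝ) ^ (2*(k-1)) ≠ 0 := by positivity
  field_simp

end
end

section
/- Define the two-qubit gate-teleportation channels on 4×4 density matrices: G(ρ) = Π₊ U ρ U† Π₊ + R_z(2θ)₁ Π₋ U ρ U† Π₋ R_z(2θ)₁† and G'(ρ) = R_z(2θ)₁ Π₊ U ρ U† Π₊ R_z(2θ)₁† + Π₋ U ρ U† Π₋, where U = CNOT (control qubit 1, target qubit 2), Π± = (I ⊗ (I ± Z))/2, and R_z(2θ)₁ acts on qubit 1. Then for any single-qubit density matrix ρ_in and |θ⟩ = cos θ|+⟩ + i sin θ|−⟩: (1/2)[G(ρ_in ⊗ Z|θ⟩⟨θ|) + G'(ρ_in ⊗ X Z|θ⟩⟨θ|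 X)] = 0, i.e., the contributions of the off-diagonal term |θ^⊥⟩⟨θ| cancel exactly under equal-probability randomization between G and G'. -/
open Matrix Kronecker ComplexOrder

noncomputable section

/-- The state |+⟩. -/
def plus : Fin 2 → ℂ := ![1/Real.sqrt 2, 1/Real.sqrt 2]

/-- The state |−⟩. -/
def minus : Fin 2 → ℂ := ![1/Real.sqrt 2, -(1/Real.sqrt 2)]

/-- The rotation state |θ⟩ = cos θ |+⟩ + i sin θ |−⟩. -/
def rotState (θ : ℝ) : Fin 2 → ℂ :=
  (Real.cos θ : ℂ) • plus + (Complex.I * Real.sin θ) • minus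

/-- The Pauli X matrix. -/
def PauliX : Matrix (Fin 2) (Fin 2) ℂ := !![0, 1; 1, 0]

/-- The Pauli Z matrix. -/
def PauliZ : Matrix (Fin 2) (Fin 2) ℂ := !![1, 0; 0, -1]

/-- R_z(φ) = cos φ · I + i sin φ · Z. -/
def Rz (φ : ℝ) : Matrix (Fin 2) (Fin 2) ℂ :=
  (Real.cos φ : ℂ) • (1 : Matrix (Fin 2) (Fin 2) ℂ) + (Complex.I * Real.sin φ) • PauliZ

/-- CNOT with control qubit 1 and target qubit 2: |c,t⟩ ↦ |c, t⊕c⟩. -/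
def CNOT : Matrix (Fin 2 × Fin 2) (Fin 2 × Fin 2) ℂ :=
  fun p q => if p.1 = q.1 ∧ p.2 = q.2 + q.1 then 1 else 0

/-- Π₊ = I ⊗ (I + Z)/2. -/
def Pip : Matrix (Fin 2 × Fin 2) (Fin 2 × Fin 2) ℂ :=
  (1 : Matrix (Fin 2) (Fin 2) ℂ) ⊗ₖ ((1/2 : ℂ) • ((1 : Matrix (Fin 2) (Fin 2) ℂ) + PauliZ))

/-- Π₋ = I ⊗ (I − Z)/2. -/
def Pim : Matrix (Fin 2 × Fin 2) (Fin 2 × Fin 2) ℂ :=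
  (1 : Matrix (Fin 2) (Fin 2) ℂ) ⊗ₖ ((1/2 : ℂ) • ((1 : Matrix (Fin 2) (Fin 2) ℂ) - PauliZ))

/-- R_z(2θ) on qubit 1. -/
def Rz1 (θ : ℝ) : Matrix (Fin 2 × Fin 2) (Fin 2 × Fin 2) ℂ :=
  Rz (2*θ) ⊗ₖ (1 : Matrix (Fin 2) (Fin 2) ℂ)

/-- The gate-teleportation channel
G(ρ) = Π₊ U ρ U† Π₊ + R_z(2θ)₁ Π₋ U ρ U† Π₋ R_z(2θ)₁†. -/
def Gtel (θ : ℝ) (ρ : Matrix (Fin 2 × Fin 2) (Fin 2 × Fin 2) ℂ) :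
    Matrix (Fin 2 × Fin 2) (Fin 2 × Fin 2) ℂ :=
  Pip * (CNOT * ρ * CNOTᴴ) * Pip + Rz1 θ * (Pim * (CNOT * ρ * CNOTᴴ) * Pim) * (Rz1 θ)ᴴ

/-- The flipped-feedback gate-teleportation channel
G'(ρ) = R_z(2θ)₁ Π₊ U ρ U† Π₊ R_z(2θ)₁† + Π₋ U ρ U† Π₋. -/
def Gtel' (θ : ℝ) (ρ : Matrix (Fin 2 × Fin 2) (Fin 2 × Fin 2) ℂ) :
    Matrix (Fin 2 × Fin 2) (Fin 2 × Fin 2) ℂ :=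
  Rz1 θ * (Pip * (CNOT * ρ * CNOTᴴ) * Pip) * (Rz1 θ)ᴴ + Pim * (CNOT * ρ * CNOTᴴ) * Pim


section Aux

private lemma aux_anc (θ : ℝ) : PauliZ * vecMulVec (rotState θ) (star (rotState θ)) =
    (1/2 : ℂ) • !![1, ((Real.cos θ:ℂ) + Complex.I*Real.sin θ)^2;
                   -(((Real.cos θ:ℂ) - Complex.I*Real.sin θ)^2), -1] := by
  have h2 : ((Real.sqrt 2 : ℝ):ℂ) * ((Real.sqrt 2 : ℝ):ℂ) = 2 := by
    rw [← Complex.ofReal_mul]; norm_num [Real.mul_self_sqrt]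
  have h2' : ((Real.sqrt 2 : ℝ):ℂ) ≠ 0 := by
    intro h; rw [h] at h2; simp at h2
  ext i j
  fin_cases i <;> fin_cases j <;>
  · rw [mul_apply]
    simp [PauliZ, rotState, plus, minus, vecMulVec_apply, mul_apply, Fin.sum_univ_two,
      Complex.star_def, Complex.conj_I, Complex.conj_ofReal,
      -Complex.ofReal_cos, -Complex.ofReal_sin]
    field_simp
    simp only [sq, h2, Complex.ofReal_cos, Complex.ofReal_sin]
    first
    | ring1
    | linear_combination 2 * Complex.cos_sq_add_sin_sq (θ:ℂ) - 2 * Complex.sin (θ:ℂ)^2 * Complex.I_sq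

private lemma aux_X (θ : ℝ) :
    PauliX * ((1/2 : ℂ) • !![1, ((Real.cos θ:ℂ) + Complex.I*Real.sin θ)^2;
        -(((Real.cos θ:ℂ) - Complex.I*Real.sin θ)^2), -1]) * PauliX =
    (1/2 : ℂ) • !![-1, -(((Real.cos θ:ℂ) - Complex.I*Real.sin θ)^2);
        ((Real.cos θ:ℂ) + Complex.I*Real.sin θ)^2, 1] := by
  ext i j
  fin_cases i <;> fin_cases j <;>
  · simp [PauliX, mul_apply, Fin.sum_univ_two]
    try ring1

private lemma aux_rz (θ : ℝ) : Rz (2*θ) =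
    !![((Real.cos θ:ℂ) + Complex.I*Real.sin θ)^2, 0;
       0, ((Real.cos θ:ℂ) - Complex.I*Real.sin θ)^2] := by
  have hc : (Real.cos (2*θ) : ℂ) = (Real.cos θ:ℂ)^2 - (Real.sin θ:ℂ)^2 := by
    rw [Real.cos_two_mul']; push_cast; ring
  have hs : (Real.sin (2*θ) : ℂ) = 2 * Real.cos θ * Real.sin θ := by
    rw [Real.sin_two_mul]; push_cast; ring
  ext i j
  fin_cases i <;> fin_cases j <;>
  · simp [Rz, PauliZ, Matrix.one_apply, hc, hs,
      -Complex.ofReal_cos, -Complex.ofReal_sin]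
    all_goals first
    | ring1
    | linear_combination -(Real.sin θ:ℂ)^2 * Complex.I_sq

private lemma aux_cnot (A : Matrix (Fin 2 × Fin 2) (Fin 2 × Fin 2) ℂ) :
    CNOT * A * CNOTᴴ = Matrix.of fun p q => A (p.1, p.2 + p.1) (q.1, q.2 + q.1) := by
  have hff : (1 + 1 : Fin 2) = 0 := rfl
  have h2f : (2 : Fin 2) = 0 := rfl
  have hf0 : (0 + 0 : Fin 2) = 0 := rfl
  have hf1 : (0 + 1 : Fin 2) = 1 := rfl
  have hf1' : (1 + 0 : Fin 2) = 1 := rfl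
  ext ⟨i, j⟩ ⟨k, l⟩
  fin_cases i <;> fin_cases j <;> fin_cases k <;> fin_cases l <;>
  · simp [CNOT, mul_apply, Fintype.sum_prod_type, Fin.sum_univ_two,
      conjTranspose_apply]
    try norm_num

private lemma aux_pip (A : Matrix (Fin 2 × Fin 2) (Fin 2 × Fin 2) ℂ) :
    Pip * A * Pip = Matrix.of fun p q => if p.2 = 0 ∧ q.2 = 0 then A p q else 0 := by
  have hff : (1 + 1 : Fin 2) = 0 := rfl
  have h2f : (2 : Fin 2) = 0 := rfl
  have hf0 : (0 + 0 : Fin 2) = 0 := rfl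
  have hf1 : (0 + 1 : Fin 2) = 1 := rfl
  have hf1' : (1 + 0 : Fin 2) = 1 := rfl
  ext ⟨i, j⟩ ⟨k, l⟩
  fin_cases i <;> fin_cases j <;> fin_cases k <;> fin_cases l <;>
  · simp [Pip, PauliZ, mul_apply, Fintype.sum_prod_type, Fin.sum_univ_two,
      Matrix.one_apply]
    try norm_num
    try ring1

private lemma aux_pim (A : Matrix (Fin 2 × Fin 2) (Fin 2 × Fin 2) ℂ) :
    Pim * A * Pim = Matrix.of fun p q => if p.2 = 1 ∧ q.2 = 1 then A p q else 0 := by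
  have hff : (1 + 1 : Fin 2) = 0 := rfl
  have h2f : (2 : Fin 2) = 0 := rfl
  have hf0 : (0 + 0 : Fin 2) = 0 := rfl
  have hf1 : (0 + 1 : Fin 2) = 1 := rfl
  have hf1' : (1 + 0 : Fin 2) = 1 := rfl
  ext ⟨i, j⟩ ⟨k, l⟩
  fin_cases i <;> fin_cases j <;> fin_cases k <;> fin_cases l <;>
  · simp [Pim, PauliZ, mul_apply, Fintype.sum_prod_type, Fin.sum_univ_two,
      Matrix.one_apply]
    try norm_num
    try ring1

private lemma aux_rz1 (θ : ℝ) (A : Matrix (Fin 2 × Fin 2) (Fin 2 × Fin 2) ℂ) :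
    Rz1 θ * A * (Rz1 θ)ᴴ = Matrix.of fun p q =>
      Rz (2*θ) p.1 p.1 * A p q * (starRingEnd ℂ) (Rz (2*θ) q.1 q.1) := by
  have hff : (1 + 1 : Fin 2) = 0 := rfl
  have h2f : (2 : Fin 2) = 0 := rfl
  have hf0 : (0 + 0 : Fin 2) = 0 := rfl
  have hf1 : (0 + 1 : Fin 2) = 1 := rfl
  have hf1' : (1 + 0 : Fin 2) = 1 := rfl
  ext ⟨i, j⟩ ⟨k, l⟩
  fin_cases i <;> fin_cases j <;> fin_cases k <;> fin_cases l <;>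
  · simp [Rz1, aux_rz, mul_apply, Fintype.sum_prod_type, Fin.sum_univ_two,
      conjTranspose_apply, Matrix.one_apply]
    try ring1

end Aux

set_option maxHeartbeats 2000000 in
/-- Under equal-probability randomization between G and G', the contributions of
the off-diagonal ancilla term |θ^⊥⟩⟨θ| = Z|θ⟩⟨θ| cancel exactly:
(1/2)[G(ρ_in ⊗ Z|θ⟩⟨θ|) + G'(ρ_in ⊗ X Z|θ⟩⟨θ| X)] = 0. -/
theorem randomization_cancels_offdiagonal (θ : ℝ) (ρin : Matrix (Fin 2) (Fin 2) ℂ)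
    (hPSD : ρin.PosSemidef) (htr : ρin.trace = 1) :
    (1/2 : ℂ) •
      (Gtel θ (ρin ⊗ₖ (PauliZ * vecMulVec (rotState θ) (star (rotState θ))))
        + Gtel' θ (ρin ⊗ₖ
            (PauliX * (PauliZ * vecMulVec (rotState θ) (star (rotState θ))) * PauliX)))
      = 0 := by
  have h1 : (Real.cos θ:ℂ)^2 + (Real.sin θ:ℂ)^2 = 1 := by
    rw [Complex.ofReal_cos, Complex.ofReal_sin]; exact Complex.cos_sq_add_sin_sq (θ:ℂ)
  rw [aux_anc θ, aux_X θ]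
  unfold Gtel Gtel'
  rw [aux_cnot, aux_cnot, aux_pip, aux_pip, aux_pim, aux_pim, aux_rz1, aux_rz1, aux_rz]
  set u := ((Real.cos θ:ℂ) + Complex.I*Real.sin θ)^2 with hu
  set v := ((Real.cos θ:ℂ) - Complex.I*Real.sin θ)^2 with hv
  have hz : ((Real.cos θ:ℂ) + Complex.I*Real.sin θ) * ((Real.cos θ:ℂ) - Complex.I*Real.sin θ) = 1 := by
    linear_combination h1 - (Real.sin θ:ℂ)^2 * Complex.I_sq
  have huv : u * v = 1 := by
    rw [hu, hv, ← mul_pow, hz, one_pow]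
  have hu0 : u ≠ 0 := fun h => by simp [h] at huv
  have hvu : v = u⁻¹ := eq_inv_of_mul_eq_one_right huv
  have hcu : (starRingEnd ℂ) u = u⁻¹ := by
    rw [← hvu, hu, hv, map_pow, map_add, _root_.map_mul, Complex.conj_I, Complex.conj_ofReal,
      Complex.conj_ofReal]
    ring
  have hcv : (starRingEnd ℂ) v = u := by
    rw [hv, hu, map_pow, map_sub, _root_.map_mul, Complex.conj_I, Complex.conj_ofReal,
      Complex.conj_ofReal]
    ring
  have hff : (1 + 1 : Fin 2) = 0 := rfl
  have h2f : (2 : Fin 2) = 0 := rfl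
  have hf0 : (0 + 0 : Fin 2) = 0 := rfl
  have hf1 : (0 + 1 : Fin 2) = 1 := rfl
  have hf1' : (1 + 0 : Fin 2) = 1 := rfl
  ext ⟨i, j⟩ ⟨k, l⟩
  fin_cases i <;> fin_cases j <;> fin_cases k <;> fin_cases l <;>
  · simp only [Matrix.smul_apply, Matrix.add_apply, Matrix.of_apply, Matrix.zero_apply,
      Matrix.kroneckerMap_apply, smul_eq_mul, Fin.mk_zero, Fin.mk_one, hff, hf0, hf1, hf1']
    norm_num [hcu, hcv, hvu, h2f]
    all_goals field_simp
    all_goals ring1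

end
end

section
/- Let k ≥ 2, 0 < α < π/4, β = arctan(tan^k α), and 0 ≤ ε ≤ 1/4. Consider the output state ρ_out ∝ (1−ε)^k p_s^{(0)} |ψ₀⟩⟨ψ₀| + k ε (1−ε)^{k−1} p_s^{(1)} |ψ₁⟩⟨ψ₁| + k(k−1) ε(1−ε)^{k−1} p_s^{(1)} |ψ₁⟩⟨ψ₁| (normalized), where p_s^{(0)} = cos^{2k}α + sin^{2k}α, p_s^{(1)} = cos^{2k−2}α sin²α + sin^{2k−2}α cos²α, |ψ₀⟩ ∝ cos^k α|+⟩ + i sin^k α|−⟩, and |ψ₁⟩ ∝ cos^{k−1}α sin α|+⟩ + i^{0} sin^{k−1}α cos α|−⟩ (all normalized). Then the infidelity ε_L = ⟨ψ₀^⊥|ρ_out|ψ₀^⊥⟩ satisfies ε_L ≤ k² ε p_s^{(1)} |⟨ψ₁|ψ₀^⊥⟩|² / ((1−ε)^k p_s^{(0)}). -/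
open Matrix

noncomputable section

/-- p_s⁽⁰⁾ = cos^{2k}α + sin^{2k}α. -/
def p0 (k : ℕ) (α : ℝ) : ℝ := Real.cos α ^ (2*k) + Real.sin α ^ (2*k)

/-- p_s⁽¹⁾ = cos^{2k−2}α sin²α + sin^{2k−2}α cos²α. -/
def p1 (k : ℕ) (α : ℝ) : ℝ :=
  Real.cos α ^ (2*k-2) * Real.sin α ^ 2 + Real.sin α ^ (2*k-2) * Real.cos α ^ 2

/-- The ideal output |ψ₀⟩ = (1/√p₀)(cos^k α|+⟩ + i sin^k α|−⟩). -/
def ψ0 (k : ℕ) (α : ℝ) : Fin 2 → ℂ :=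
  ((Real.sqrt (p0 k α) : ℂ))⁻¹ •
    (((Real.cos α : ℂ) ^ k) • plus + (Complex.I * (Real.sin α : ℂ) ^ k) • minus)

/-- The state orthogonal to |ψ₀⟩: |ψ₀^⊥⟩ = (1/√p₀)(i sin^k α|+⟩ + cos^k α|−⟩). -/
def ψ0perp (k : ℕ) (α : ℝ) : Fin 2 → ℂ :=
  ((Real.sqrt (p0 k α) : ℂ))⁻¹ •
    ((Complex.I * (Real.sin α : ℂ) ^ k) • plus + ((Real.cos α : ℂ) ^ k) • minus)

/-- The single-error state |ψ₁⟩ = (1/√p₁)(cos^{k−1}α sin α|+⟩ + sin^{k−1}α cos α|−⟩). -/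
def ψ1 (k : ℕ) (α : ℝ) : Fin 2 → ℂ :=
  ((Real.sqrt (p1 k α) : ℂ))⁻¹ •
    (((Real.cos α : ℂ) ^ (k-1) * (Real.sin α : ℂ)) • plus
      + ((Real.sin α : ℂ) ^ (k-1) * (Real.cos α : ℂ)) • minus)

/-- The normalized transversal-injection output state
ρ_out ∝ (1−ε)^k p₀|ψ₀⟩⟨ψ₀| + kε(1−ε)^{k−1}p₁|ψ₁⟩⟨ψ₁| + k(k−1)ε(1−ε)^{k−1}p₁|ψ₁⟩⟨ψ₁|. -/
def ρout (k : ℕ) (α ε : ℝ) : Matrix (Fin 2) (Fin 2) ℂ :=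
  ((((1-ε)^k * p0 k α + (k:ℝ)*ε*(1-ε)^(k-1) * p1 k α
      + (k:ℝ)*((k:ℝ)-1)*ε*(1-ε)^(k-1) * p1 k α : ℝ) : ℂ))⁻¹ •
    ((((1-ε)^k * p0 k α : ℝ) : ℂ) • vecMulVec (ψ0 k α) (star (ψ0 k α))
      + (((k:ℝ)*ε*(1-ε)^(k-1) * p1 k α : ℝ) : ℂ) • vecMulVec (ψ1 k α) (star (ψ1 k α))
      + (((k:ℝ)*((k:ℝ)-1)*ε*(1-ε)^(k-1) * p1 k α : ℝ) : ℂ)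
          • vecMulVec (ψ1 k α) (star (ψ1 k α)))

/-- Core inequality of Theorem 1: the infidelity ε_L = ⟨ψ₀^⊥|ρ_out|ψ₀^⊥⟩ of the
transversal-injection output satisfies
ε_L ≤ k² ε p_s⁽¹⁾ |⟨ψ₁|ψ₀^⊥⟩|² / ((1−ε)^k p_s⁽⁰⁾). -/
theorem theorem1_core_inequality (k : ℕ) (hk : 2 ≤ k) (α ε : ℝ)
    (hα0 : 0 < α) (hα1 : α < Real.pi/4) (hε0 : 0 ≤ ε) (hε1 : ε ≤ 1/4) :
    (star (ψ0perp k α) ⬝ᵥ (ρout k α ε).mulVec (ψ0perp k α)).re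
      ≤ (k:ℝ)^2 * ε * p1 k α * ‖star (ψ1 k α) ⬝ᵥ ψ0perp k α‖ ^ 2
          / ((1-ε)^k * p0 k α) := by
  have hquad : ∀ (v w : Fin 2 → ℂ),
      star v ⬝ᵥ (vecMulVec w (star w)).mulVec v = (star v ⬝ᵥ w) * (star w ⬝ᵥ v) := by
    intro v w
    simp [vecMulVec, mulVec, dotProduct, Fin.sum_univ_two]
    ring
  have hconj : ∀ (v w : Fin 2 → ℂ), star v ⬝ᵥ w = starRingEnd ℂ (star w ⬝ᵥ v) := by
    intro v w
    simp [dotProduct, Fin.sum_univ_two, mul_comm]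
  have horth : star (ψ0perp k α) ⬝ᵥ ψ0 k α = 0 := by
    simp [ψ0, ψ0perp, plus, minus, dotProduct, Fin.sum_univ_two, map_pow,
      ← Complex.cos_conj, ← Complex.sin_conj, Complex.conj_ofReal, map_inv₀, Complex.conj_I]
    ring
  set A : ℝ := (1-ε)^k * p0 k α with hA
  set B : ℝ := (k:ℝ)*ε*(1-ε)^(k-1) * p1 k α with hB
  set C : ℝ := (k:ℝ)*((k:ℝ)-1)*ε*(1-ε)^(k-1) * p1 k α with hC
  set x : ℂ := star (ψ1 k α) ⬝ᵥ ψ0perp k α with hx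
  set a : ℝ := ‖x‖ with ha
  have hval : star (ψ0perp k α) ⬝ᵥ (ρout k α ε).mulVec (ψ0perp k α)
      = (((A+B+C)⁻¹ * ((B+C) * a ^ 2) : ℝ) : ℂ) := by
    simp only [ρout, smul_mulVec, add_mulVec, dotProduct_smul, dotProduct_add,
      smul_eq_mul, hquad, horth, ← hA, ← hB, ← hC]
    rw [hconj (ψ0perp k α) (ψ1 k α), ← hx]
    have hxx : starRingEnd ℂ x * x = ((a ^ 2 : ℝ) : ℂ) := by
      rw [mul_comm, Complex.mul_conj, ha, Complex.sq_norm]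
    rw [hxx]
    push_cast
    ring
  rw [hval, Complex.ofReal_re]
  -- now a purely real inequality
  have hpi : (0:ℝ) < Real.pi := Real.pi_pos
  have hcos : 0 < Real.cos α := by
    apply Real.cos_pos_of_mem_Ioo
    constructor <;> [linarith; linarith]
  have hsin : 0 < Real.sin α := Real.sin_pos_of_pos_of_lt_pi hα0 (by linarith)
  have hp0 : 0 < p0 k α := by
    have := pow_pos hcos (2*k); have := pow_pos hsin (2*k); unfold p0; linarith
  have hp1 : 0 < p1 k α := by
    have h1 := mul_pos (pow_pos hcos (2*k-2)) (pow_pos hsin 2)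
    have h2 := mul_pos (pow_pos hsin (2*k-2)) (pow_pos hcos 2)
    unfold p1; linarith
  have hε' : (0:ℝ) < 1 - ε := by linarith
  have hAp : 0 < A := mul_pos (pow_pos hε' k) hp0
  have hkr : (2:ℝ) ≤ (k:ℝ) := by exact_mod_cast hk
  have hpk : (0:ℝ) ≤ (1-ε)^(k-1) := le_of_lt (pow_pos hε' _)
  have hBp : 0 ≤ B := by
    rw [hB]; apply mul_nonneg; apply mul_nonneg; apply mul_nonneg
    · linarith
    · exact hε0
    · exact hpk
    · exact le_of_lt hp1
  have hCp : 0 ≤ C := by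
    rw [hC]; apply mul_nonneg; apply mul_nonneg; apply mul_nonneg
    · nlinarith
    · exact hε0
    · exact hpk
    · exact le_of_lt hp1
  have hpow1 : (1-ε)^(k-1) ≤ 1 := pow_le_one₀ (by linarith) (by linarith)
  have hnum : (B+C) * a ^ 2 ≤ (k:ℝ)^2 * ε * p1 k α * a ^ 2 := by
    have hBC : B + C = (k:ℝ)^2 * ε * p1 k α * (1-ε)^(k-1) := by rw [hB, hC]; ring
    rw [hBC]
    have ha2 : (0:ℝ) ≤ a ^ 2 := sq_nonneg a
    nlinarith [mul_nonneg (mul_nonneg (mul_nonneg (sq_nonneg ((k:ℝ))) hε0) (le_of_lt hp1)) ha2]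
  rw [inv_mul_eq_div]
  exact div_le_div₀ (by positivity) hnum hAp (by linarith)


end
end
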